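/- (Theorem 1.) Let V1, V1', A1, A1', C, C', A2, A2', V2, V2' be subsets of ℕ → Σ with V1 ⊆ V1', V2 ⊆ V2', C ⊆ C', A1 ⊆ A1' and A2 ⊆ A2' (each primed component over-approximates the corresponding unprimed one), and let S = V1 ∩ A1 ∩ C ∩ A2 ∩ V2 be the full system. Let φa and φt be linear-time properties (sets of traces). If (a) V1' ∩ A1 ∩ C' ⊨ φa, (b) V2' ∩ A2 ∩ C' ⊨ φa, and (c) V1 ∩ A1' ∩ C ∩ A2' ∩ V2 ⊨ φt, then S ⊨ φa ∩ φt, i.e., every trace of S belongs to both φa and φt. -/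
import Mathlib

theorem theorem_one {α : Type*}
    (V1 V1' A1 A1' C C' A2 A2' V2 V2' φa φt : Set (ℕ → α))
    (hV1 : V1 ⊆ V1') (hV2 : V2 ⊆ V2') (hC : C ⊆ C')
    (hA1 : A1 ⊆ A1') (hA2 : A2 ⊆ A2')
    (S : Set (ℕ → α)) (hS : S = V1 ∩ A1 ∩ C ∩ A2 ∩ V2)
    (ha : ∀ σ ∈ V1' ∩ A1 ∩ C', σ ∈ φa)
    (hb : ∀ σ ∈ V2' ∩ A2 ∩ C', σ ∈ φa)
    (hc : ∀ σ ∈ V1 ∩ A1' ∩ C ∩ A2' ∩ V2, σ ∈ φt) :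
    ∀ σ ∈ S, σ ∈ φa ∩ φt := by
  intro σ hσ
  rw [hS] at hσ
  obtain ⟨⟨⟨⟨h1, h2⟩, h3⟩, h4⟩, h5⟩ := hσ
  exact ⟨ha σ ⟨⟨hV1 h1, h2⟩, hC h3⟩, hc σ ⟨⟨⟨⟨h1, hA1 h2⟩, h3⟩, hA2 h4⟩, h5⟩⟩
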